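/- Let p and q be coprime integers with p > q > 1. Then the topological closure in ℝ of the span-set Span = {span(n) : n ∈ ℕ} equals ρ of the set of ω-words that label a branch of T_{p/q} from 0 and have all their digits in D = {p−2q+1, …, p−1}; that is, closure(Span) = {ρ(w) : w labels a branch of T_{p/q} from 0 and w_k ∈ D for all k}. -/

import Mathlib

/-- `w` labels a branch of the base-p/q automaton with digit set `E` from state `n`:
there are states `s 0 = n, s 1, s 2, …` with `q·s(k+1) = p·s k + w k` and `w k ∈ E`. -/
def IsBranch (p q : ℕ) (E : Set ℤ) (n : ℕ) (w : ℕ → ℤ) : Prop :=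
  ∃ s : ℕ → ℕ, s 0 = n ∧ ∀ k : ℕ, (q : ℤ) * s (k + 1) = p * s k + w k ∧ w k ∈ E

/-- `u` (a word of length `ℓ`) labels a path from `n` to `m` in the base-p/q automaton
with digit set `E`. -/
def IsPath (p q : ℕ) (E : Set ℤ) (n m ℓ : ℕ) (u : ℕ → ℤ) : Prop :=
  ∃ s : ℕ → ℕ, s 0 = n ∧ s ℓ = m ∧
    ∀ k < ℓ, (q : ℤ) * s (k + 1) = p * s k + u k ∧ u k ∈ E

/-- The canonical digit alphabet `A_p = {0, 1, …, p−1}`. -/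
def Ap (p : ℕ) : Set ℤ := Set.Icc 0 ((p : ℤ) - 1)

/-- The lower alphabet `{0, 1, …, q−1}`. -/
def LowAlph (q : ℕ) : Set ℤ := Set.Icc 0 ((q : ℤ) - 1)

/-- The upper alphabet `{p−q, …, p−1}`. -/
def UpAlph (p q : ℕ) : Set ℤ := Set.Icc ((p : ℤ) - q) ((p : ℤ) - 1)

/-- The alphabet `D = {p−2q+1, …, p−1}` of the automaton `S_{p/q}`. -/
def Dalph (p q : ℕ) : Set ℤ := Set.Icc ((p : ℤ) - 2 * q + 1) ((p : ℤ) - 1)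

/-- Evaluation after the radix point: `ρ(w) = Σ_{i≥1} (w_i/q)·(q/p)^i`
(here `w k` is the `(k+1)`-st digit). -/
noncomputable def rho (p q : ℕ) (w : ℕ → ℤ) : ℝ :=
  ∑' i : ℕ, ((w i : ℝ) / q) * ((q : ℝ) / p) ^ (i + 1)

namespace S12

/-- min-word successor: ⌈pm/q⌉ -/
def cmin (p q m : ℕ) : ℕ := (p * m + (q - 1)) / q

/-- max-word successor -/
def fmax (p q m : ℕ) : ℕ := (p * m + (p - 1)) / q

lemma div_window (a q : ℕ) (hq : 0 < q) : q * (a / q) ≤ a ∧ a < q * (a / q) + q := by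
  have h := Nat.div_add_mod a q
  have h2 := Nat.mod_lt a hq
  omega

lemma cmin_spec (p q : ℕ) (hq : 0 < q) (m : ℕ) :
    p * m ≤ q * cmin p q m ∧ q * cmin p q m ≤ p * m + (q - 1) := by
  have h := div_window (p * m + (q - 1)) q hq
  unfold cmin
  omega

lemma fmax_spec (p q : ℕ) (hq : 0 < q) (hqp : q ≤ p) (m : ℕ) :
    p * m + (p - q) ≤ q * fmax p q m ∧ q * fmax p q m ≤ p * m + (p - 1) := by
  have h := div_window (p * m + (p - 1)) q hq
  unfold fmax
  omega

/-- ℤ versions -/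
lemma cmin_zspec (p q : ℕ) (hq : 0 < q) (m : ℕ) :
    (p : ℤ) * m ≤ q * cmin p q m ∧ (q : ℤ) * cmin p q m ≤ p * m + q - 1 := by
  have h := cmin_spec p q hq m
  have h1 : ((p*m : ℕ):ℤ) ≤ ((q * cmin p q m : ℕ):ℤ) := by exact_mod_cast h.1
  have h2 : ((q * cmin p q m : ℕ):ℤ) ≤ ((p * m + (q-1) : ℕ):ℤ) := by exact_mod_cast h.2
  push_cast [Nat.cast_sub (show 1 ≤ q from hq)] at h1 h2
  constructor <;> linarith

lemma fmax_zspec (p q : ℕ) (hq : 0 < q) (hqp : q ≤ p) (m : ℕ) :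
    (p : ℤ) * m + p - q ≤ q * fmax p q m ∧ (q : ℤ) * fmax p q m ≤ p * m + p - 1 := by
  have h := fmax_spec p q hq hqp m
  have h1 : ((p * m + (p - q) : ℕ) : ℤ) = (p:ℤ) * m + p - q := by
    push_cast [Nat.cast_sub hqp]; ring
  have h2 : ((p * m + (p - 1) : ℕ) : ℤ) = (p:ℤ) * m + p - 1 := by
    have : 1 ≤ p := le_trans hq hqp
    push_cast; omega
  constructor
  · rw [← h1]; exact_mod_cast h.1
  · rw [← h2]; exact_mod_cast h.2

lemma int_window {q a b : ℤ} (hq : 0 < q) (h1 : a - b < q) (h2 : b - a < q)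
    (hd : q ∣ a - b) : a = b := by
  obtain ⟨c, hc⟩ := hd
  rcases lt_trichotomy c 0 with h | h | h
  · have h5 : q * c ≤ q * (-1) := mul_le_mul_of_nonneg_left (by omega) hq.le
    have h6 : q * (-1) = -q := by ring
    omega
  · rw [h, mul_zero] at hc; omega
  · have h5 : q * 1 ≤ q * c := mul_le_mul_of_nonneg_left (by omega) hq.le
    have h6 : q * 1 = q := by ring
    omega

lemma nat_eq_of_q_window {q : ℕ} (hq : 0 < q) {s t : ℕ} {lo : ℤ}
    (hs1 : lo ≤ (q:ℤ) * s) (hs2 : (q:ℤ) * s < lo + q)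
    (ht1 : lo ≤ (q:ℤ) * t) (ht2 : (q:ℤ) * t < lo + q) : s = t := by
  have hq' : (0:ℤ) < q := by exact_mod_cast hq
  have h : (q:ℤ) * s = q * t := by
    apply int_window hq' (by omega) (by omega) ⟨(s:ℤ) - t, by ring⟩
  have : (s:ℤ) = t := by
    have := mul_left_cancel₀ (show (q:ℤ) ≠ 0 by omega) h
    exact this
  exact_mod_cast this

/-- uniqueness: a state with digit in [0,q-1] is cmin -/
lemma eq_cmin (p q : ℕ) (hq : 0 < q) {m s : ℕ} {d : ℤ}
    (hstep : (q:ℤ) * s = p * m + d) (h0 : 0 ≤ d) (h1 : d ≤ q - 1) : s = cmin p q m := by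
  have hc := cmin_zspec p q hq m
  exact nat_eq_of_q_window hq (lo := (p:ℤ) * m) (by omega) (by omega) (by omega) (by omega)

/-- uniqueness: a state with digit in [p-q,p-1] is fmax -/
lemma eq_fmax (p q : ℕ) (hq : 0 < q) (hqp : q ≤ p) {m s : ℕ} {d : ℤ}
    (hstep : (q:ℤ) * s = p * m + d) (h0 : (p:ℤ) - q ≤ d) (h1 : d ≤ p - 1) : s = fmax p q m := by
  have hc := fmax_zspec p q hq hqp m
  exact nat_eq_of_q_window hq (lo := (p:ℤ) * m + p - q) (by omega) (by omega) (by omega) (by omega)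

lemma cmin_mono (p q : ℕ) : Monotone (cmin p q) := fun a b h =>
  Nat.div_le_div_right (by have := Nat.mul_le_mul_left p h; omega)

lemma fmax_mono (p q : ℕ) : Monotone (fmax p q) := fun a b h =>
  Nat.div_le_div_right (by have := Nat.mul_le_mul_left p h; omega)

lemma cmin_le_fmax (p q : ℕ) (hqp : q ≤ p) (m : ℕ) : cmin p q m ≤ fmax p q m :=
  Nat.div_le_div_right (by omega)

lemma cmin_iter_le_fmax_iter (p q : ℕ) (hqp : q ≤ p) (n k : ℕ) :
    (cmin p q)^[k] n ≤ (fmax p q)^[k] n := by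
  induction k with
  | zero => simp
  | succ k ih =>
    rw [Function.iterate_succ_apply', Function.iterate_succ_apply']
    exact le_trans (cmin_mono p q ih) (cmin_le_fmax p q hqp _)

lemma cmin_iter_mono (p q : ℕ) (k : ℕ) : Monotone ((cmin p q)^[k]) :=
  Monotone.iterate (cmin_mono p q) k

lemma fmax_iter_mono (p q : ℕ) (k : ℕ) : Monotone ((fmax p q)^[k]) :=
  Monotone.iterate (fmax_mono p q) k

/-- key subadditivity : fmax a ≤ cmin b + fmax (a-b) for b ≤ a -/
lemma fmax_le_cmin_add (p q : ℕ) (hq : 0 < q) (hqp : q ≤ p) {a b : ℕ} (h : b ≤ a) :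
    fmax p q a ≤ cmin p q b + fmax p q (a - b) := by
  have h1 := (fmax_zspec p q hq hqp a).2
  have h2 := (cmin_zspec p q hq b).1
  have h3 := (fmax_zspec p q hq hqp (a - b)).1
  have hcast : ((a - b : ℕ) : ℤ) = (a:ℤ) - b := by push_cast [Nat.cast_sub h]; ring
  rw [hcast] at h3
  have hq' : (0:ℤ) < q := by exact_mod_cast hq
  have key : (q:ℤ) * fmax p q a < q * (cmin p q b + fmax p q (a-b)) + q := by
    push_cast; nlinarith
  have : (fmax p q a : ℤ) < (cmin p q b + fmax p q (a-b) : ℕ) + 1 := by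
    by_contra hcon
    push_neg at hcon
    have : (q:ℤ) * ((cmin p q b + fmax p q (a-b) : ℕ) + 1) ≤ q * fmax p q a :=
      (mul_le_mul_iff_right₀ hq').mpr hcon
    push_cast at this key ⊢
    nlinarith
  exact_mod_cast Int.lt_add_one_iff.mp this

lemma diff_le_fmax_iter (p q : ℕ) (hq : 0 < q) (hqp : q ≤ p) (n N : ℕ) :
    (fmax p q)^[N] n ≤ (cmin p q)^[N] n + (fmax p q)^[N] 0 := by
  induction N with
  | zero => simp
  | succ N ih =>
    rw [Function.iterate_succ_apply', Function.iterate_succ_apply', Function.iterate_succ_apply']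
    calc fmax p q ((fmax p q)^[N] n)
        ≤ cmin p q ((cmin p q)^[N] n) + fmax p q ((fmax p q)^[N] n - (cmin p q)^[N] n) :=
          fmax_le_cmin_add p q hq hqp (cmin_iter_le_fmax_iter p q hqp n N)
      _ ≤ _ := by
          have : (fmax p q)^[N] n - (cmin p q)^[N] n ≤ (fmax p q)^[N] 0 := by omega
          exact Nat.add_le_add_left (fmax_mono p q this) _

lemma cmin_add_mul_q (p q : ℕ) (hq : 0 < q) (m t : ℕ) :
    cmin p q (m + t * q) = cmin p q m + t * p := by
  unfold cmin
  rw [show p * (m + t * q) + (q-1) = (p * m + (q-1)) + (t*p) * q by ring]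
  rw [Nat.add_mul_div_right _ _ hq]

lemma fmax_add_mul_q (p q : ℕ) (hq : 0 < q) (m t : ℕ) :
    fmax p q (m + t * q) = fmax p q m + t * p := by
  unfold fmax
  rw [show p * (m + t * q) + (p-1) = (p * m + (p-1)) + (t*p) * q by ring]
  rw [Nat.add_mul_div_right _ _ hq]

lemma cmin_iter_shift (p q : ℕ) (hq : 0 < q) (N : ℕ) :
    ∀ n t, (cmin p q)^[N] (n + t * q ^ N) = (cmin p q)^[N] n + t * p ^ N := by
  induction N with
  | zero => simp
  | succ N ih =>
    intro n t
    rw [Function.iterate_succ_apply, Function.iterate_succ_apply]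
    rw [show n + t * q ^ (N+1) = n + (t * q ^ N) * q by ring]
    rw [cmin_add_mul_q p q hq]
    rw [show cmin p q n + t * q ^ N * p = cmin p q n + (t * p) * q ^ N by ring]
    rw [ih]
    ring

lemma fmax_iter_shift (p q : ℕ) (hq : 0 < q) (N : ℕ) :
    ∀ n t, (fmax p q)^[N] (n + t * q ^ N) = (fmax p q)^[N] n + t * p ^ N := by
  induction N with
  | zero => simp
  | succ N ih =>
    intro n t
    rw [Function.iterate_succ_apply, Function.iterate_succ_apply]
    rw [show n + t * q ^ (N+1) = n + (t * q ^ N) * q by ring]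
    rw [fmax_add_mul_q p q hq]
    rw [show fmax p q n + t * q ^ N * p = fmax p q n + (t * p) * q ^ N by ring]
    rw [ih]
    ring

lemma cmin_succ_eq (p q : ℕ) (hq : 0 < q) (hp : 0 < p) (m : ℕ) :
    cmin p q (m + 1) = fmax p q m + 1 := by
  unfold cmin fmax
  rw [show p * (m+1) + (q-1) = (p * m + (p-1)) + q by
    have h : p*(m+1) = p*m + p := by ring
    omega]
  rw [Nat.add_div_right _ hq]

lemma cmin_iter_one (p q : ℕ) (hq : 0 < q) (hp : 0 < p) (N : ℕ) :
    (cmin p q)^[N] 1 = (fmax p q)^[N] 0 + 1 := by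
  induction N with
  | zero => simp
  | succ N ih =>
    rw [Function.iterate_succ_apply', Function.iterate_succ_apply', ih]
    exact cmin_succ_eq p q hq hp _

lemma cmin_zero (p q : ℕ) (hq : 0 < q) : cmin p q 0 = 0 := by
  unfold cmin
  simp [Nat.div_eq_of_lt (by omega : q - 1 < q)]

lemma cmin_iter_zero (p q : ℕ) (hq : 0 < q) (N : ℕ) : (cmin p q)^[N] 0 = 0 :=
  Function.iterate_fixed (cmin_zero p q hq) N



noncomputable def rr (p q : ℕ) : ℝ := (q : ℝ) / p

section
variable {p q : ℕ} (hq : 0 < q) (hpq : q < p)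
include hq hpq

lemma hp0 : (0:ℝ) < p := by
  have : 0 < p := lt_trans hq hpq
  exact_mod_cast this

omit hpq in
lemma hq0 : (0:ℝ) < q := by exact_mod_cast hq

lemma rr_pos : 0 < rr p q := div_pos (hq0 hq) (hp0 hq hpq)

lemma rr_lt_one : rr p q < 1 := by
  rw [rr, div_lt_one (hp0 hq hpq)]
  exact_mod_cast hpq

lemma one_sub_rr : 0 < 1 - rr p q := by have := rr_lt_one hq hpq; linarith

lemma summable_pow : Summable (fun i : ℕ => rr p q ^ i) :=
  summable_geometric_of_lt_one (rr_pos hq hpq).le (rr_lt_one hq hpq)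

lemma summable_bnd (B : ℝ) : Summable (fun i : ℕ => (B / q) * rr p q ^ (i+1)) := by
  apply ((summable_pow hq hpq).mul_left (B / q * rr p q)).congr
  intro i; rw [pow_succ]; ring

lemma term_bound {w : ℕ → ℤ} {B : ℝ} (hB : ∀ k, |(w k : ℝ)| ≤ B) (i : ℕ) :
    ‖((w i : ℝ) / q) * rr p q ^ (i + 1)‖ ≤ (B / q) * rr p q ^ (i+1) := by
  have hr0 := rr_pos hq hpq
  rw [Real.norm_eq_abs, abs_mul, abs_div, abs_pow, abs_of_pos hr0,
    abs_of_pos (hq0 hq)]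
  gcongr
  exact hB i

/-- summability of digit series with bound B -/
lemma summable_digits {w : ℕ → ℤ} {B : ℝ} (hB : ∀ k, |(w k : ℝ)| ≤ B) :
    Summable (fun i => ((w i : ℝ) / q) * rr p q ^ (i + 1)) :=
  Summable.of_norm_bounded (summable_bnd hq hpq B) (term_bound hq hpq hB)

end
end S12

namespace S12
open Filter Topology

lemma rho_eq (p q : ℕ) (w : ℕ → ℤ) :
    rho p q w = ∑' i : ℕ, ((w i : ℝ) / q) * rr p q ^ (i + 1) := rfl

section
variable {p q : ℕ} (hq : 0 < q) (hpq : q < p)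
include hq hpq

lemma partial_sum {w : ℕ → ℤ} {s : ℕ → ℕ}
    (hstep : ∀ k, (q:ℤ) * s (k+1) = p * s k + w k) (N : ℕ) :
    ∑ i ∈ Finset.range N, ((w i : ℝ) / q) * rr p q ^ (i+1)
      = (s N : ℝ) * rr p q ^ N - s 0 := by
  have hqR : (q:ℝ) ≠ 0 := ne_of_gt (hq0 hq)
  have hpR : (p:ℝ) ≠ 0 := ne_of_gt (hp0 hq hpq)
  induction N with
  | zero => simp
  | succ N ih =>
    rw [Finset.sum_range_succ, ih]
    have hw : (w N : ℝ) = q * s (N+1) - p * s N := by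
      have := hstep N
      have h2 : (q:ℝ) * s (N+1) = p * s N + w N := by exact_mod_cast this
      linarith
    rw [hw, rr, pow_succ]
    field_simp
    ring

lemma rho_tail {w : ℕ → ℤ} {s : ℕ → ℕ} {B : ℝ}
    (hstep : ∀ k, (q:ℤ) * s (k+1) = p * s k + w k)
    (hB : ∀ k, |(w k : ℝ)| ≤ B) (N : ℕ) :
    |rho p q w - ((s N : ℝ) * rr p q ^ N - s 0)| ≤ B * rr p q ^ N := by
  have hsum := summable_digits hq hpq hB
  have hB0 : 0 ≤ B := le_trans (abs_nonneg _) (hB 0)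
  have hr0 := rr_pos hq hpq
  have hr1 := rr_lt_one hq hpq
  have htail := hsum.sum_add_tsum_nat_add N
  rw [rho_eq, ← htail, partial_sum hq hpq hstep N]
  have heq : ∀ x : ℝ, |(x + ∑' i, ((w (i+N) : ℝ)/q) * rr p q ^ (i+N+1)) - x|
      = |∑' i, ((w (i+N) : ℝ)/q) * rr p q ^ (i+N+1)| := by
    intro x; rw [add_sub_cancel_left]
  rw [heq]
  have h1 : |∑' i, ((w (i+N) : ℝ)/q) * rr p q ^ (i+N+1)|
      ≤ ∑' i, (B/q) * rr p q ^ (i+N+1) := by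
    calc |∑' i, ((w (i+N) : ℝ)/q) * rr p q ^ (i+N+1)|
        ≤ ∑' i, ‖((w (i+N) : ℝ)/q) * rr p q ^ (i+N+1)‖ := by
          rw [← Real.norm_eq_abs]
          apply norm_tsum_le_tsum_norm
          apply Summable.of_nonneg_of_le (fun i => norm_nonneg _)
            (fun i => term_bound hq hpq (fun k => hB k) (i+N))
          exact (summable_bnd hq hpq B).comp_injective (add_left_injective N)
      _ ≤ ∑' i, (B/q) * rr p q ^ (i+N+1) := by
          apply Summable.tsum_le_tsum (fun i => term_bound hq hpq (fun k => hB k) (i+N))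
          · apply Summable.of_nonneg_of_le (fun i => norm_nonneg _)
              (fun i => term_bound hq hpq (fun k => hB k) (i+N))
            exact (summable_bnd hq hpq B).comp_injective (add_left_injective N)
          · exact (summable_bnd hq hpq B).comp_injective (add_left_injective N)
  have h2 : ∑' i : ℕ, (B/q) * rr p q ^ (i+N+1)
      = ((B/q) * rr p q ^ (N+1)) * (1 - rr p q)⁻¹ := by
    have : ∀ i : ℕ, (B/q) * rr p q ^ (i+N+1) = ((B/q) * rr p q ^ (N+1)) * rr p q ^ i := by
      intro i; rw [show i+N+1 = (N+1)+i by ring, pow_add]; ring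
    rw [tsum_congr this, tsum_mul_left, tsum_geometric_of_lt_one hr0.le hr1]
  have h3 : ((B/q) * rr p q ^ (N+1)) * (1 - rr p q)⁻¹ ≤ B * rr p q ^ N := by
    have hqR : (q:ℝ) ≠ 0 := ne_of_gt (hq0 hq)
    have hpR : (p:ℝ) ≠ 0 := ne_of_gt (hp0 hq hpq)
    have hpq1 : (q:ℝ) + 1 ≤ p := by exact_mod_cast hpq
    have hB0' : (0:ℝ) ≤ B := hB0
    have key : (B/q) * rr p q * (1 - rr p q)⁻¹ ≤ B := by
      have h1r : 1 - rr p q = ((p:ℝ)-q)/p := by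
        rw [rr, sub_div, div_self hpR]
      rw [h1r, inv_div, rr]
      have e1 : B/(q:ℝ) * ((q:ℝ)/(p:ℝ)) * ((p:ℝ)/((p:ℝ)-(q:ℝ))) = B/((p:ℝ)-(q:ℝ)) := by
        field_simp
      rw [e1]
      exact div_le_self hB0 (by linarith)
    calc ((B/q) * rr p q ^ (N+1)) * (1 - rr p q)⁻¹
        = ((B/q) * rr p q * (1 - rr p q)⁻¹) * rr p q ^ N := by rw [pow_succ]; ring
      _ ≤ B * rr p q ^ N := mul_le_mul_of_nonneg_right key (pow_nonneg hr0.le N)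
  calc |∑' i, ((w (i+N) : ℝ)/q) * rr p q ^ (i+N+1)| ≤ _ := h1
    _ = _ := h2
    _ ≤ _ := h3

lemma states_tendsto {w : ℕ → ℤ} {s : ℕ → ℕ} {B : ℝ}
    (hstep : ∀ k, (q:ℤ) * s (k+1) = p * s k + w k)
    (hB : ∀ k, |(w k : ℝ)| ≤ B) :
    Tendsto (fun N => (s N : ℝ) * rr p q ^ N) atTop (𝓝 (rho p q w + s 0)) := by
  have h0 : Tendsto (fun N => (s N : ℝ) * rr p q ^ N - (rho p q w + s 0)) atTop (𝓝 0) := by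
    apply squeeze_zero_norm (a := fun N => B * rr p q ^ N)
    · intro N
      have := rho_tail hq hpq hstep hB N
      rw [Real.norm_eq_abs, abs_sub_comm]
      calc |rho p q w + (s 0:ℝ) - (s N:ℝ) * rr p q ^ N|
          = |rho p q w - ((s N : ℝ) * rr p q ^ N - s 0)| := by ring_nf
        _ ≤ B * rr p q ^ N := this
    · have := (tendsto_pow_atTop_nhds_zero_of_lt_one (rr_pos hq hpq).le
        (rr_lt_one hq hpq)).const_mul B
      simpa using this
  have := h0.add_const (rho p q w + s 0)
  simpa using this

end
end S12

namespace S12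
open Filter Topology

def Sset (p q : ℕ) : Set ℝ :=
  {x | ∃ w : ℕ → ℤ, IsBranch p q (Ap p) 0 w ∧ (∀ k, w k ∈ Dalph p q) ∧ x = rho p q w}

section
variable {p q : ℕ} (hq : 0 < q) (hpq : q < p)
include hq hpq

omit hpq in
lemma low_states {n : ℕ} {w : ℕ → ℤ} {s : ℕ → ℕ} (h0 : s 0 = n)
    (hstep : ∀ k, (q:ℤ) * s (k+1) = p * s k + w k ∧ w k ∈ LowAlph q) :
    ∀ k, s k = (cmin p q)^[k] n := by
  intro k
  induction k with
  | zero => simpa using h0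
  | succ k ih =>
    rw [Function.iterate_succ_apply', ← ih]
    have h1 := (hstep k).1
    have h3 := (hstep k).2
    rw [LowAlph, Set.mem_Icc] at h3
    exact eq_cmin p q hq h1 h3.1 h3.2

lemma up_states {n : ℕ} {w : ℕ → ℤ} {s : ℕ → ℕ} (h0 : s 0 = n)
    (hstep : ∀ k, (q:ℤ) * s (k+1) = p * s k + w k ∧ w k ∈ UpAlph p q) :
    ∀ k, s k = (fmax p q)^[k] n := by
  intro k
  induction k with
  | zero => simpa using h0
  | succ k ih =>
    rw [Function.iterate_succ_apply', ← ih]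
    have h1 := (hstep k).1
    have h3 := (hstep k).2
    rw [UpAlph, Set.mem_Icc] at h3
    exact eq_fmax p q hq hpq.le h1 h3.1 h3.2

lemma min_tendsto {n : ℕ} {w : ℕ → ℤ} (hw : IsBranch p q (LowAlph q) n w) :
    Tendsto (fun N => ((cmin p q)^[N] n : ℝ) * rr p q ^ N) atTop (𝓝 (rho p q w + n)) := by
  obtain ⟨s, hs0, hstep⟩ := hw
  have hB : ∀ k, |(w k : ℝ)| ≤ (q : ℝ) := by
    intro k
    have h3 := (hstep k).2
    rw [LowAlph, Set.mem_Icc] at h3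
    have h1' : (0:ℝ) ≤ (w k : ℝ) := by exact_mod_cast h3.1
    have h2' : (w k : ℝ) ≤ (q:ℝ) - 1 := by exact_mod_cast h3.2
    have := hq0 (q := q) hq
    rw [abs_le]
    constructor <;> linarith
  have := states_tendsto hq hpq (fun k => (hstep k).1) hB
  rw [hs0] at this
  have heq : ∀ N, s N = (cmin p q)^[N] n := low_states hq hs0 hstep
  refine this.congr (fun N => by rw [heq N])

lemma max_tendsto {n : ℕ} {w : ℕ → ℤ} (hw : IsBranch p q (UpAlph p q) n w) :
    Tendsto (fun N => ((fmax p q)^[N] n : ℝ) * rr p q ^ N) atTop (𝓝 (rho p q w + n)) := by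
  obtain ⟨s, hs0, hstep⟩ := hw
  have hB : ∀ k, |(w k : ℝ)| ≤ (p : ℝ) := by
    intro k
    have h3 := (hstep k).2
    rw [UpAlph, Set.mem_Icc] at h3
    have h1' : (p:ℝ) - q ≤ (w k : ℝ) := by exact_mod_cast h3.1
    have h2' : (w k : ℝ) ≤ (p:ℝ) - 1 := by exact_mod_cast h3.2
    have hq' := hq0 (q := q) hq
    have hqp' : (q:ℝ) ≤ p := by exact_mod_cast hpq.le
    rw [abs_le]
    constructor <;> linarith
  have := states_tendsto hq hpq (fun k => (hstep k).1) hB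
  rw [hs0] at this
  have heq : ∀ N, s N = (fmax p q)^[N] n := up_states hq hpq hs0 hstep
  refine this.congr (fun N => by rw [heq N])

/-- the span of n as a limit of the difference of extremal states -/
lemma span_tendsto {n : ℕ} {wl wu : ℕ → ℤ}
    (hwl : IsBranch p q (LowAlph q) n wl) (hwu : IsBranch p q (UpAlph p q) n wu) :
    Tendsto (fun N => (((fmax p q)^[N] n : ℝ) - ((cmin p q)^[N] n : ℝ)) * rr p q ^ N)
      atTop (𝓝 (rho p q wu - rho p q wl)) := by
  have h1 := max_tendsto hq hpq hwu
  have h2 := min_tendsto hq hpq hwl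
  have h3 := h1.sub h2
  have : (rho p q wu + n) - (rho p q wl + n) = rho p q wu - rho p q wl := by ring
  rw [this] at h3
  exact h3.congr (fun N => by ring)

/-- membership builder for the target set -/
lemma mem_Sset {x : ℝ} {v : ℕ → ℕ} (hv0 : v 0 = 0)
    (hd1 : ∀ k, (p:ℤ) * v k ≤ q * v (k+1))
    (hd2 : ∀ k, (q:ℤ) * v (k+1) ≤ p * v k + p - 1)
    (hd3 : ∀ k, (p:ℤ) - 2*q + 1 + p * v k ≤ q * v (k+1))
    (hx : Tendsto (fun N => (v N : ℝ) * rr p q ^ N) atTop (𝓝 x)) :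
    x ∈ Sset p q := by
  set w : ℕ → ℤ := fun k => (q:ℤ) * v (k+1) - p * v k with hw
  have hstep : ∀ k, (q:ℤ) * v (k+1) = p * v k + w k := fun k => by rw [hw]; ring
  have hAp : ∀ k, w k ∈ Ap p := by
    intro k
    rw [Ap, Set.mem_Icc]
    constructor
    · have := hd1 k; simp only [hw]; omega
    · have := hd2 k; simp only [hw]; omega
  refine ⟨w, ⟨v, hv0, fun k => ⟨hstep k, hAp k⟩⟩, ?_, ?_⟩
  · intro k
    rw [Dalph, Set.mem_Icc]
    have hA := hAp k
    rw [Ap, Set.mem_Icc] at hA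
    constructor
    · have := hd3 k; simp only [hw]; omega
    · exact hA.2
  · have hB : ∀ k, |(w k : ℝ)| ≤ (p:ℝ) := by
      intro k
      obtain ⟨h1, h2⟩ := hAp k
      have h1' : (0:ℝ) ≤ (w k : ℝ) := by exact_mod_cast h1
      have h2' : (w k : ℝ) ≤ (p:ℝ) - 1 := by exact_mod_cast h2
      rw [abs_le]; constructor <;> linarith
    have ht := states_tendsto hq hpq hstep hB
    rw [hv0] at ht
    have : rho p q w + ((0:ℕ):ℝ) = rho p q w := by simp
    rw [this] at ht
    exact tendsto_nhds_unique hx ht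

/-- extraction from the target set -/
lemma Sset_elim {x : ℝ} (hx : x ∈ Sset p q) :
    ∃ v : ℕ → ℕ, v 0 = 0 ∧
      (∀ k, (p:ℤ) * v k ≤ q * v (k+1) ∧ (q:ℤ) * v (k+1) ≤ p * v k + p - 1 ∧
        (p:ℤ) - 2*q + 1 + p * v k ≤ q * v (k+1)) ∧
      Tendsto (fun N => (v N : ℝ) * rr p q ^ N) atTop (𝓝 x) := by
  obtain ⟨w, ⟨s, hs0, hstep⟩, hD, hxw⟩ := hx
  refine ⟨s, hs0, fun k => ?_, ?_⟩
  · have h12 := (hstep k).2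
    rw [Ap, Set.mem_Icc] at h12
    have h34 := hD k
    rw [Dalph, Set.mem_Icc] at h34
    have h5 := (hstep k).1
    refine ⟨by omega, by omega, by omega⟩
  · have hB : ∀ k, |(w k : ℝ)| ≤ (p:ℝ) := by
      intro k
      have h12 := (hstep k).2
      rw [Ap, Set.mem_Icc] at h12
      have h1' : (0:ℝ) ≤ (w k : ℝ) := by exact_mod_cast h12.1
      have h2' : (w k : ℝ) ≤ (p:ℝ) - 1 := by exact_mod_cast h12.2
      have hp' := hp0 hq hpq
      rw [abs_le]; constructor <;> linarith
    have ht := states_tendsto hq hpq (fun k => (hstep k).1) hB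
    rw [hs0] at ht
    rw [hxw]
    simpa using ht

end
end S12

namespace S12
open Filter Topology

section
variable {p q : ℕ} (hq : 0 < q) (hpq : q < p)
include hq hpq

/-- difference-word digit identity, ℤ level -/
lemma diff_digit_bounds (n k : ℕ) :
    (p:ℤ) - 2*q + 1 + p * ((fmax p q)^[k] n - (cmin p q)^[k] n)
      ≤ q * ((fmax p q)^[k+1] n - (cmin p q)^[k+1] n) ∧
    (q:ℤ) * ((fmax p q)^[k+1] n - (cmin p q)^[k+1] n)
      ≤ p * ((fmax p q)^[k] n - (cmin p q)^[k] n) + p - 1 := by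
  have hf := fmax_zspec p q hq hpq.le ((fmax p q)^[k] n)
  have hc := cmin_zspec p q hq ((cmin p q)^[k] n)
  simp only [Function.iterate_succ_apply']
  constructor
  · nlinarith [hf.1, hc.2]
  · nlinarith [hf.2, hc.1]

/-- Span ⊆ Sset in the wide case p ≥ 2q-1 -/
lemma span_mem_wide (hwide : 2*q ≤ p + 1) {n : ℕ} {wl wu : ℕ → ℤ}
    (hwl : IsBranch p q (LowAlph q) n wl) (hwu : IsBranch p q (UpAlph p q) n wu) :
    rho p q wu - rho p q wl ∈ Sset p q := by
  set v : ℕ → ℕ := fun k => (fmax p q)^[k] n - (cmin p q)^[k] n with hv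
  have hle : ∀ k, (cmin p q)^[k] n ≤ (fmax p q)^[k] n :=
    fun k => cmin_iter_le_fmax_iter p q hpq.le n k
  have hcast : ∀ k, (v k : ℤ) = ((fmax p q)^[k] n : ℤ) - ((cmin p q)^[k] n : ℤ) := by
    intro k; rw [hv]; push_cast [Nat.cast_sub (hle k)]; ring
  have hdig := fun k => diff_digit_bounds hq hpq n k
  apply mem_Sset hq hpq (v := v)
  · rw [hv]; simp
  · intro k
    have h := (hdig k).1
    rw [← hcast k, ← hcast (k+1)] at h
    have hw : (0:ℤ) ≤ (p:ℤ) - 2*q + 1 := by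
      have : (2*q : ℤ) ≤ (p:ℤ) + 1 := by exact_mod_cast hwide
      omega
    omega
  · intro k
    have h := (hdig k).2
    rw [← hcast k, ← hcast (k+1)] at h
    omega
  · intro k
    have h := (hdig k).1
    rw [← hcast k, ← hcast (k+1)] at h
    omega
  · have hT := span_tendsto hq hpq hwl hwu
    apply hT.congr
    intro N
    have : ((v N : ℝ)) = ((fmax p q)^[N] n : ℝ) - ((cmin p q)^[N] n : ℝ) := by
      rw [hv]; push_cast [Nat.cast_sub (hle N)]; ring
    rw [this]

omit hq hpq in
lemma cancel_aux {A P Pinv : ZMod q} (h : Pinv * P = 1) : A + -A * Pinv * P = 0 := by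
  have h2 : A + -A * Pinv * P = A - A * (Pinv * P) := by ring
  rw [h2, h, mul_one, sub_self]

/-- prefix realization: every valid state v N is an exact difference for some n -/
lemma realize (hco : Nat.Coprime p q) {v : ℕ → ℕ} (hv0 : v 0 = 0)
    (hd1 : ∀ k, (p:ℤ) * v k ≤ q * v (k+1))
    (hd2 : ∀ k, (q:ℤ) * v (k+1) ≤ p * v k + p - 1)
    (hd3 : ∀ k, (p:ℤ) - 2*q + 1 + p * v k ≤ q * v (k+1)) :
    ∀ N, ∃ n, (fmax p q)^[N] n = (cmin p q)^[N] n + v N := by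
  haveI : NeZero q := ⟨by omega⟩
  intro N
  induction N with
  | zero => exact ⟨0, by simp [hv0]⟩
  | succ N ih =>
    obtain ⟨n, hn⟩ := ih
    set t := (cmin p q)^[N] n with htdef
    set s := (fmax p q)^[N] n with hsdef
    set d' : ℤ := (q:ℤ) * v (N+1) - p * v N with hd'
    have hd'0 : 0 ≤ d' := by have := hd1 N; omega
    have hd'1 : d' ≤ (p:ℤ) - 1 := by have := hd2 N; omega
    have hd'3 : (p:ℤ) - 2*q + 1 ≤ d' := by have := hd3 N; omega
    set a : ℤ := max 0 ((p:ℤ) - q - d') with ha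
    have hqz : (1:ℤ) ≤ (q:ℤ) := by exact_mod_cast hq
    have hpz : (q:ℤ) + 1 ≤ (p:ℤ) := by exact_mod_cast hpq
    have ha0 : 0 ≤ a := le_max_left _ _
    have ha1 : a ≤ (q:ℤ) - 1 := by rw [ha]; omega
    have hap1 : (p:ℤ) - q ≤ a + d' := by rw [ha]; omega
    have hap2 : a + d' ≤ (p:ℤ) - 1 := by rw [ha]; omega
    -- choose j to fix residues
    have hPunit : IsUnit ((p : ZMod q)^(N+1)) :=
      ((ZMod.isUnit_iff_coprime p q).mpr hco).pow _
    set z : ZMod q := (((-((p:ℤ)*t + a)) : ℤ) : ZMod q) * ((p : ZMod q)^(N+1))⁻¹ with hz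
    set j : ℕ := z.val with hj
    have hdvd : (q:ℤ) ∣ (p:ℤ)*t + (j:ℤ)*(p:ℤ)^(N+1) + a := by
      rw [← ZMod.intCast_zmod_eq_zero_iff_dvd]
      have hjz : ((j:ℕ) : ZMod q) = z := by rw [hj, ZMod.natCast_val, ZMod.cast_id]
      have hcastlem : (((p:ℤ)*t + (j:ℤ)*(p:ℤ)^(N+1) + a : ℤ) : ZMod q)
          = (((p:ℤ)*t + a : ℤ) : ZMod q) + ((j:ℕ) : ZMod q) * ((p:ZMod q)^(N+1)) := by
        push_cast; ring
      rw [hcastlem, hjz, hz]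
      set A : ZMod q := (((p:ℤ)*t + a : ℤ) : ZMod q) with hA
      have hA' : ((-((p:ℤ)*t + a) : ℤ) : ZMod q) = -A := by rw [hA]; push_cast; ring
      rw [hA']
      exact cancel_aux (ZMod.inv_mul_of_unit _ hPunit)
    obtain ⟨c, hc⟩ := hdvd
    set t' : ℕ := t + j * p^N with ht'
    set s' : ℕ := s + j * p^N with hs'
    have hpt' : (p:ℤ)*t' + a = q*c := by
      rw [ht']; push_cast; rw [← hc]; ring
    have hc0 : 0 ≤ c := by
      have h1 : (0:ℤ) ≤ (p:ℤ)*t' + a := by positivity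
      nlinarith
    have hcNat : ((c.toNat : ℕ) : ℤ) = c := Int.toNat_of_nonneg hc0
    have hceq : c.toNat = cmin p q t' := by
      apply eq_cmin p q hq (d := a) _ ha0 ha1
      rw [hcNat]; linarith [hpt']
    have hsz : ((s':ℕ):ℤ) = (t':ℤ) + v N := by
      rw [hs', ht', hn]; push_cast; ring
    have hfeq : c.toNat + v (N+1) = fmax p q s' := by
      apply eq_fmax p q hq hpq.le (d := a + d') _ hap1 hap2
      push_cast [hcNat]
      rw [hsz]
      have : (q:ℤ)*c = (p:ℤ)*t' + a := hpt'.symm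
      rw [mul_add, this, hd']
      push_cast
      ring
    refine ⟨n + j * q^N, ?_⟩
    rw [Function.iterate_succ_apply', Function.iterate_succ_apply']
    rw [fmax_iter_shift p q hq N n j, cmin_iter_shift p q hq N n j]
    rw [← htdef, ← hsdef, ← ht', ← hs']
    rw [← hceq, ← hfeq]

end
end S12

namespace S12
open Filter Topology

def SpanSet (p q : ℕ) (mw mx : ℕ → ℕ → ℤ) : Set ℝ :=
  {x : ℝ | ∃ n : ℕ, x = rho p q (mx n) - rho p q (mw n)}

section
variable {p q : ℕ} (hq : 0 < q) (hpq : q < p)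
include hq hpq

lemma Sset_subset_closure (hco : Nat.Coprime p q) {mw mx : ℕ → ℕ → ℤ}
    (hmw : ∀ n, IsBranch p q (LowAlph q) n (mw n))
    (hmx : ∀ n, IsBranch p q (UpAlph p q) n (mx n)) :
    Sset p q ⊆ closure (SpanSet p q mw mx) := by
  intro x hx
  obtain ⟨v, hv0, hd, hvx⟩ := Sset_elim hq hpq hx
  rw [Metric.mem_closure_iff]
  intro ε hε
  have hr0 := rr_pos hq hpq
  have hr1 := rr_lt_one hq hpq
  have hp' := hp0 hq hpq
  -- bound for the target x
  set w : ℕ → ℤ := fun k => (q:ℤ) * v (k+1) - p * v k with hw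
  have hstep : ∀ k, (q:ℤ) * v (k+1) = p * v k + w k := fun k => by rw [hw]; ring
  have hB : ∀ k, |(w k : ℝ)| ≤ (p:ℝ) := by
    intro k
    obtain ⟨h1, h2, h3⟩ := hd k
    have l1 : (0:ℤ) ≤ w k := by simp only [hw]; omega
    have l2 : w k ≤ (p:ℤ) - 1 := by simp only [hw]; omega
    have l1' : (0:ℝ) ≤ (w k : ℝ) := by exact_mod_cast l1
    have l2' : (w k : ℝ) ≤ (p:ℝ) - 1 := by exact_mod_cast l2
    rw [abs_le]; constructor <;> linarith
  have hxw : x = rho p q w := by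
    have ht := states_tendsto hq hpq hstep hB
    rw [hv0] at ht
    have : rho p q w + ((0:ℕ):ℝ) = rho p q w := by simp
    rw [this] at ht
    exact tendsto_nhds_unique hvx ht
  -- pick N with 3p * rr^N < ε
  have h3p : Tendsto (fun N => 3*(p:ℝ) * rr p q ^ N) atTop (𝓝 0) := by
    have := (tendsto_pow_atTop_nhds_zero_of_lt_one hr0.le hr1).const_mul (3*(p:ℝ))
    simpa using this
  obtain ⟨N, hN⟩ := (h3p.eventually (gt_mem_nhds hε)).exists
  -- realize v N
  obtain ⟨n, hn⟩ := realize hq hpq hco hv0 (fun k => (hd k).1) (fun k => (hd k).2.1)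
    (fun k => (hd k).2.2) N
  refine ⟨rho p q (mx n) - rho p q (mw n), ⟨n, rfl⟩, ?_⟩
  -- bounds
  have hx_tail : |x - (v N : ℝ) * rr p q ^ N| ≤ (p:ℝ) * rr p q ^ N := by
    have := rho_tail hq hpq hstep hB N
    rw [hv0] at this
    rw [hxw]
    calc |rho p q w - (v N : ℝ) * rr p q ^ N|
        = |rho p q w - ((v N : ℝ) * rr p q ^ N - ((0:ℕ):ℝ))| := by norm_num
      _ ≤ (p:ℝ) * rr p q ^ N := this
  obtain ⟨sl, hsl0, hslstep⟩ := hmw n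
  obtain ⟨su, hsu0, hsustep⟩ := hmx n
  have hBl : ∀ k, |((mw n) k : ℝ)| ≤ (p:ℝ) := by
    intro k
    have h3 := (hslstep k).2
    rw [LowAlph, Set.mem_Icc] at h3
    have l1' : (0:ℝ) ≤ ((mw n) k : ℝ) := by exact_mod_cast h3.1
    have l2' : ((mw n) k : ℝ) ≤ (q:ℝ) - 1 := by exact_mod_cast h3.2
    have : (q:ℝ) ≤ p := by exact_mod_cast hpq.le
    rw [abs_le]; constructor <;> linarith
  have hBu : ∀ k, |((mx n) k : ℝ)| ≤ (p:ℝ) := by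
    intro k
    have h3 := (hsustep k).2
    rw [UpAlph, Set.mem_Icc] at h3
    have l1' : (p:ℝ) - q ≤ ((mx n) k : ℝ) := by exact_mod_cast h3.1
    have l2' : ((mx n) k : ℝ) ≤ (p:ℝ) - 1 := by exact_mod_cast h3.2
    have : (0:ℝ) < q := hq0 hq
    have hqp' : (q:ℝ) ≤ p := by exact_mod_cast hpq.le
    rw [abs_le]; constructor <;> linarith
  have htl := rho_tail hq hpq (fun k => (hslstep k).1) hBl N
  have htu := rho_tail hq hpq (fun k => (hsustep k).1) hBu N
  have hsleq : ∀ k, sl k = (cmin p q)^[k] n := low_states hq hsl0 hslstep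
  have hsueq : ∀ k, su k = (fmax p q)^[k] n := up_states hq hpq hsu0 hsustep
  rw [hsl0] at htl
  rw [hsu0] at htu
  rw [hsleq N] at htl
  rw [hsueq N] at htu
  -- the difference matches v N
  have hdiff : ((fmax p q)^[N] n : ℝ) - ((cmin p q)^[N] n : ℝ) = (v N : ℝ) := by
    rw [hn]; push_cast; ring
  rw [Real.dist_eq]
  have key : |x - (rho p q (mx n) - rho p q (mw n))| ≤ 3*(p:ℝ) * rr p q ^ N := by
    have e1 : x - (rho p q (mx n) - rho p q (mw n))
        = (x - (v N : ℝ) * rr p q ^ N)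
          - (rho p q (mx n) - (((fmax p q)^[N] n : ℝ) * rr p q ^ N - n))
          + (rho p q (mw n) - (((cmin p q)^[N] n : ℝ) * rr p q ^ N - n)) := by
      rw [← hdiff]; ring
    rw [e1]
    calc _ ≤ |(x - (v N : ℝ) * rr p q ^ N)
          - (rho p q (mx n) - (((fmax p q)^[N] n : ℝ) * rr p q ^ N - n))|
          + |rho p q (mw n) - (((cmin p q)^[N] n : ℝ) * rr p q ^ N - n)| := abs_add_le _ _
      _ ≤ |x - (v N : ℝ) * rr p q ^ N|
          + |rho p q (mx n) - (((fmax p q)^[N] n : ℝ) * rr p q ^ N - n)|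
          + |rho p q (mw n) - (((cmin p q)^[N] n : ℝ) * rr p q ^ N - n)| := by
            have t1 : ∀ A B : ℝ, |A - B| ≤ |A| + |B| := fun A B => by
              calc |A - B| = |A + -B| := by rw [sub_eq_add_neg]
                _ ≤ |A| + |-B| := abs_add_le _ _
                _ = |A| + |B| := by rw [abs_neg]
            have := t1 (x - (v N : ℝ) * rr p q ^ N)
              (rho p q (mx n) - (((fmax p q)^[N] n : ℝ) * rr p q ^ N - n))
            linarith
      _ ≤ (p:ℝ) * rr p q ^ N + (p:ℝ) * rr p q ^ N + (p:ℝ) * rr p q ^ N := by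
            gcongr <;> first
              | exact hx_tail
              | exact htu
              | exact htl
      _ = 3*(p:ℝ) * rr p q ^ N := by ring
  linarith
end
end S12

namespace S12
open Filter Topology

/-- state function computed from a digit word by integer division -/
def stf (p q : ℕ) (w : ℕ → ℤ) : ℕ → ℤ
  | 0 => 0
  | (k+1) => (p * stf p q w k + w k) / q

lemma stf_cont (p q k : ℕ) : Continuous (fun w : ℕ → ℤ => stf p q w k) := by
  induction k with
  | zero => exact continuous_const
  | succ k ih =>
    show Continuous (fun w : ℕ → ℤ => ((p:ℤ) * stf p q w k + w k) / q)
    exact (continuous_of_discreteTopology (f := fun z : ℤ × ℤ => ((p:ℤ) * z.1 + z.2) / q)).comp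
      (ih.prodMk (continuous_apply k))

def Tset (p q : ℕ) : Set (ℕ → ℤ) :=
  {w | IsBranch p q (Ap p) 0 w ∧ ∀ k, w k ∈ Dalph p q}

section
variable {p q : ℕ} (hq : 0 < q) (hpq : q < p)
include hq hpq

lemma Tset_char {w : ℕ → ℤ} :
    w ∈ Tset p q ↔ ∀ k, w k ∈ Ap p ∧ w k ∈ Dalph p q ∧
      (q:ℤ) * stf p q w (k+1) = p * stf p q w k + w k ∧ 0 ≤ stf p q w (k+1) := by
  have hqz : (q:ℤ) ≠ 0 := by exact_mod_cast hq.ne'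
  constructor
  · rintro ⟨⟨s, hs0, hstep⟩, hD⟩
    have hsf : ∀ k, stf p q w k = s k := by
      intro k
      induction k with
      | zero => rw [hs0]; rfl
      | succ k ih =>
        show ((p:ℤ) * stf p q w k + w k) / q = s (k+1)
        rw [ih, ← (hstep k).1, Int.mul_ediv_cancel_left _ hqz]
    intro k
    refine ⟨(hstep k).2, hD k, ?_, ?_⟩
    · rw [hsf k, hsf (k+1)]; exact (hstep k).1
    · rw [hsf (k+1)]; positivity
  · intro h
    have hnn : ∀ k, 0 ≤ stf p q w k := by
      intro k
      cases k with
      | zero => exact le_refl 0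
      | succ k => exact (h k).2.2.2
    refine ⟨⟨fun k => (stf p q w k).toNat, ?_, ?_⟩, fun k => (h k).2.1⟩
    · simp [stf]
    · intro k
      refine ⟨?_, (h k).1⟩
      rw [Int.toNat_of_nonneg (hnn (k+1)), Int.toNat_of_nonneg (hnn k)]
      exact (h k).2.2.1

lemma Tset_isClosed : IsClosed (Tset p q) := by
  have : Tset p q = ⋂ k, {w : ℕ → ℤ | w k ∈ Ap p ∧ w k ∈ Dalph p q ∧
      (q:ℤ) * stf p q w (k+1) = p * stf p q w k + w k ∧ 0 ≤ stf p q w (k+1)} := by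
    ext w
    rw [Set.mem_iInter]
    exact Tset_char hq hpq
  rw [this]
  apply isClosed_iInter
  intro k
  have h1 : IsClosed {w : ℕ → ℤ | w k ∈ Ap p} :=
    (isClosed_discrete (Ap p)).preimage (continuous_apply k)
  have h2 : IsClosed {w : ℕ → ℤ | w k ∈ Dalph p q} :=
    (isClosed_discrete (Dalph p q)).preimage (continuous_apply k)
  have h3 : IsClosed {w : ℕ → ℤ |
      (q:ℤ) * stf p q w (k+1) = p * stf p q w k + w k} := by
    have hc : Continuous (fun w : ℕ → ℤ =>
        (q:ℤ) * stf p q w (k+1) - p * stf p q w k - w k) :=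
      ((continuous_const.mul (stf_cont p q (k+1))).sub
        (continuous_const.mul (stf_cont p q k))).sub (continuous_apply k)
    have := (isClosed_discrete {(0:ℤ)}).preimage hc
    convert this using 1
    ext w
    simp only [Set.mem_setOf_eq, Set.mem_preimage, Set.mem_singleton_iff]
    omega
  have h4 : IsClosed {w : ℕ → ℤ | 0 ≤ stf p q w (k+1)} :=
    (isClosed_discrete (Set.Ici 0)).preimage (stf_cont p q (k+1))
  have : {w : ℕ → ℤ | w k ∈ Ap p ∧ w k ∈ Dalph p q ∧
      (q:ℤ) * stf p q w (k+1) = p * stf p q w k + w k ∧ 0 ≤ stf p q w (k+1)}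
      = {w : ℕ → ℤ | w k ∈ Ap p} ∩ ({w | w k ∈ Dalph p q} ∩
        ({w | (q:ℤ) * stf p q w (k+1) = p * stf p q w k + w k} ∩ {w | 0 ≤ stf p q w (k+1)})) := by
    ext w
    simp only [Set.mem_setOf_eq, Set.mem_inter_iff]
    try tauto
  rw [this]
  exact h1.inter (h2.inter (h3.inter h4))
end
end S12

namespace S12
open Filter Topology

def clampD (p q : ℕ) (z : ℤ) : ℤ := max (min z ((p:ℤ)-1)) ((p:ℤ) - 2*q + 1)

noncomputable def Gmap (p q : ℕ) : (ℕ → ℤ) → ℝ :=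
  fun w => ∑' i : ℕ, ((clampD p q (w i) : ℝ)/q) * rr p q ^ (i+1)

section
variable {p q : ℕ} (hq : 0 < q) (hpq : q < p)
include hq hpq

lemma Tset_isCompact : IsCompact (Tset p q) := by
  apply IsCompact.of_isClosed_subset
    (isCompact_univ_pi (s := fun _ : ℕ => Dalph p q)
      (fun i => by rw [Dalph]; exact (Set.finite_Icc _ _).isCompact))
    (Tset_isClosed hq hpq)
  intro w hw
  rw [Set.mem_univ_pi]
  exact fun k => hw.2 k

lemma clampD_bd (z : ℤ) : |(clampD p q z : ℝ)| ≤ (p:ℝ) + 2*q := by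
  have h : |clampD p q z| ≤ (p:ℤ) + 2*q := by
    rw [clampD]
    have h1 : (0:ℤ) ≤ p := by positivity
    have h2 : (0:ℤ) ≤ q := by positivity
    rw [abs_le]
    omega
  calc |(clampD p q z : ℝ)| = |(clampD p q z : ℤ)| := by rw [Int.cast_abs]
    _ ≤ (((p:ℤ) + 2*q : ℤ) : ℝ) := by exact_mod_cast h
    _ = (p:ℝ) + 2*q := by push_cast; ring
  
lemma Gmap_cont : Continuous (Gmap p q) := by
  apply continuous_tsum (u := fun i => (((p:ℝ)+2*q) / q) * rr p q ^ (i+1))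
  · intro i
    exact (continuous_of_discreteTopology
      (f := fun z : ℤ => ((clampD p q z : ℝ)/q) * rr p q ^ (i+1))).comp (continuous_apply i)
  · exact summable_bnd hq hpq _
  · intro i w
    have hr0 := rr_pos hq hpq
    rw [Real.norm_eq_abs, abs_mul, abs_div, abs_pow, abs_of_pos hr0, abs_of_pos (hq0 hq)]
    gcongr
    exact clampD_bd hq hpq _

lemma Gmap_eq_rho {w : ℕ → ℤ} (hw : ∀ k, w k ∈ Ap p ∧ w k ∈ Dalph p q) :
    Gmap p q w = rho p q w := by
  rw [Gmap, rho_eq]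
  apply tsum_congr
  intro i
  have h1 := (hw i).1
  have h2 := (hw i).2
  rw [Ap, Set.mem_Icc] at h1
  rw [Dalph, Set.mem_Icc] at h2
  have : clampD p q (w i) = w i := by rw [clampD]; omega
  rw [this]

lemma Sset_isClosed : IsClosed (Sset p q) := by
  have himg : Sset p q = Gmap p q '' Tset p q := by
    ext x
    constructor
    · rintro ⟨w, h1, h2, rfl⟩
      have hAp : ∀ k, w k ∈ Ap p := by
        obtain ⟨s, hs0, hstep⟩ := h1
        exact fun k => (hstep k).2
      exact ⟨w, ⟨h1, h2⟩, (Gmap_eq_rho hq hpq (fun k => ⟨hAp k, h2 k⟩)).symm ▸ rfl⟩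
    · rintro ⟨w, hw, rfl⟩
      have hAp : ∀ k, w k ∈ Ap p := by
        obtain ⟨s, hs0, hstep⟩ := hw.1
        exact fun k => (hstep k).2
      exact ⟨w, hw.1, hw.2, Gmap_eq_rho hq hpq (fun k => ⟨hAp k, hw.2 k⟩)⟩
  rw [himg]
  exact ((Tset_isCompact hq hpq).image (Gmap_cont hq hpq)).isClosed

end
end S12

namespace S12
open Filter Topology

noncomputable def mwdig (p q m : ℕ) : ℕ → ℤ :=
  fun k => (q:ℤ) * ((cmin p q)^[k+1] m) - p * ((cmin p q)^[k] m)

/-- value of the minimal word from m : limit of cmin-iterates -/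
noncomputable def gm (p q m : ℕ) : ℝ := rho p q (mwdig p q m) + m

section
variable {p q : ℕ} (hq : 0 < q) (hpq : q < p)
include hq hpq

omit hpq in
lemma mwdig_step (m : ℕ) :
    ∀ k, (q:ℤ) * ((cmin p q)^[k+1] m) = p * ((cmin p q)^[k] m) + mwdig p q m k := by
  intro k; rw [mwdig]; ring

omit hpq in
lemma mwdig_bound (m k : ℕ) : |(mwdig p q m k : ℝ)| ≤ (q:ℝ) := by
  have h := cmin_zspec p q hq ((cmin p q)^[k] m)
  have h1 : (0:ℤ) ≤ mwdig p q m k := by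
    rw [mwdig]; simp only [Function.iterate_succ_apply']; omega
  have h2 : mwdig p q m k ≤ (q:ℤ) - 1 := by
    rw [mwdig]; simp only [Function.iterate_succ_apply']; omega
  have h1' : (0:ℝ) ≤ (mwdig p q m k : ℝ) := by exact_mod_cast h1
  have h2' : (mwdig p q m k : ℝ) ≤ (q:ℝ) - 1 := by exact_mod_cast h2
  rw [abs_le]
  have := hq0 (q := q) hq
  constructor <;> linarith

lemma gm_tendsto (m : ℕ) :
    Tendsto (fun N => (((cmin p q)^[N] m : ℕ) : ℝ) * rr p q ^ N) atTop (𝓝 (gm p q m)) := by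
  have := states_tendsto hq hpq (s := fun k => (cmin p q)^[k] m)
    (mwdig_step hq m) (fun k => mwdig_bound hq m k)
  simpa [gm] using this

lemma gm_zero : gm p q 0 = 0 := by
  have h1 := gm_tendsto hq hpq 0
  have h2 : Tendsto (fun N : ℕ => (((cmin p q)^[N] 0 : ℕ) : ℝ) * rr p q ^ N) atTop (𝓝 0) := by
    have : ∀ N, (((cmin p q)^[N] 0 : ℕ) : ℝ) * rr p q ^ N = 0 := by
      intro N; rw [cmin_iter_zero p q hq]; simp
    rw [show (fun N : ℕ => (((cmin p q)^[N] 0 : ℕ) : ℝ) * rr p q ^ N) = fun _ => (0:ℝ)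
      from funext this]
    exact tendsto_const_nhds
  exact tendsto_nhds_unique h1 h2

lemma gm_ge (m : ℕ) : (m:ℝ) ≤ gm p q m := by
  apply ge_of_tendsto (gm_tendsto hq hpq m)
  apply Filter.Eventually.of_forall
  intro N
  induction N with
  | zero => simp
  | succ N ih =>
    have h : (p:ℤ) * ((cmin p q)^[N] m) ≤ q * ((cmin p q)^[N+1] m) := by
      rw [Function.iterate_succ_apply']
      exact (cmin_zspec p q hq ((cmin p q)^[N] m)).1
    have hreal : (p:ℝ) * ((cmin p q)^[N] m : ℕ) ≤ (q:ℝ) * ((cmin p q)^[N+1] m : ℕ) := by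
      exact_mod_cast h
    have hp' := hp0 hq hpq
    have hq' := hq0 (q := q) hq
    have hrn : (0:ℝ) ≤ rr p q ^ N := pow_nonneg (rr_pos hq hpq).le N
    have key : (((cmin p q)^[N] m : ℕ) : ℝ) * rr p q ^ N
        ≤ (((cmin p q)^[N+1] m : ℕ) : ℝ) * rr p q ^ (N+1) := by
      rw [pow_succ, rr]
      have h2 : (((cmin p q)^[N] m : ℕ) : ℝ) ≤ (((cmin p q)^[N+1] m : ℕ) : ℝ) * ((q:ℝ)/p) := by
        rw [mul_div_assoc']
        rw [le_div_iff₀ hp']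
        nlinarith
      calc (((cmin p q)^[N] m : ℕ) : ℝ) * rr p q ^ N
          ≤ ((((cmin p q)^[N+1] m : ℕ) : ℝ) * ((q:ℝ)/p)) * rr p q ^ N :=
            mul_le_mul_of_nonneg_right h2 hrn
        _ = (((cmin p q)^[N+1] m : ℕ) : ℝ) * (rr p q ^ N * ((q:ℝ)/p)) := by ring
    linarith
  
lemma gm_le (m : ℕ) : gm p q m ≤ (m:ℝ) + q := by
  have h := rho_tail hq hpq (s := fun k => (cmin p q)^[k] m)
    (mwdig_step hq m) (fun k => mwdig_bound hq m k) 0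
  simp only [Function.iterate_zero_apply, pow_zero, mul_one, sub_self] at h
  rw [gm]
  have := abs_le.mp h
  linarith [this.2]

lemma gm_mono {m m' : ℕ} (h : m ≤ m') : gm p q m ≤ gm p q m' := by
  apply le_of_tendsto_of_tendsto' (gm_tendsto hq hpq m) (gm_tendsto hq hpq m')
  intro N
  have := cmin_iter_mono p q N h
  have hrn : (0:ℝ) ≤ rr p q ^ N := pow_nonneg (rr_pos hq hpq).le N
  have hc : (((cmin p q)^[N] m : ℕ) : ℝ) ≤ (((cmin p q)^[N] m' : ℕ) : ℝ) := by exact_mod_cast this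
  exact mul_le_mul_of_nonneg_right hc hrn

lemma gm_rec (m : ℕ) : gm p q m = rr p q * gm p q (cmin p q m) := by
  have h1 : Tendsto (fun N => (((cmin p q)^[N+1] m : ℕ) : ℝ) * rr p q ^ (N+1)) atTop
      (𝓝 (gm p q m)) := (gm_tendsto hq hpq m).comp (tendsto_add_atTop_nat 1)
  have h2 : Tendsto (fun N => (((cmin p q)^[N+1] m : ℕ) : ℝ) * rr p q ^ (N+1)) atTop
      (𝓝 (rr p q * gm p q (cmin p q m))) := by
    have := (gm_tendsto hq hpq (cmin p q m)).const_mul (rr p q)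
    apply this.congr
    intro N
    rw [Function.iterate_succ_apply, pow_succ]
    ring
  exact tendsto_nhds_unique h1 h2

lemma gm_succ (m : ℕ) : gm p q (m+1) = rr p q * gm p q (fmax p q m + 1) := by
  rw [gm_rec hq hpq (m+1), cmin_succ_eq p q hq (by omega)]

end
end S12

namespace S12
open Filter Topology

open scoped Classical in
/-- greedy state sequence targeting x -/
noncomputable def greedy (p q : ℕ) (x : ℝ) : ℕ → ℕ
  | 0 => 0
  | k+1 => Nat.findGreatest (fun u => gm p q u * rr p q ^ (k+1) ≤ x) (fmax p q (greedy p q x k))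

section
variable {p q : ℕ} (hq : 0 < q) (hpq : q < p)
include hq hpq

open scoped Classical in
lemma greedy_inv {x : ℝ} (hx0 : 0 ≤ x) (hx1 : x ≤ gm p q 1) : ∀ k,
    gm p q (greedy p q x k) * rr p q ^ k ≤ x ∧
      x ≤ gm p q (greedy p q x k + 1) * rr p q ^ k := by
  intro k
  induction k with
  | zero =>
    constructor
    · simp [greedy, gm_zero hq hpq, hx0]
    · simpa [greedy] using hx1
  | succ k ih =>
    set m := greedy p q x k with hm
    have hgd : greedy p q x (k+1)
        = Nat.findGreatest (fun u => gm p q u * rr p q ^ (k+1) ≤ x) (fmax p q m) := by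
      rw [greedy]
    have hPc : gm p q (cmin p q m) * rr p q ^ (k+1) ≤ x := by
      have : gm p q (cmin p q m) * rr p q ^ (k+1) = gm p q m * rr p q ^ k := by
        rw [gm_rec hq hpq m, pow_succ]; ring
      rw [this]; exact ih.1
    have hcf := cmin_le_fmax p q hpq.le m
    constructor
    · rw [hgd]
      exact Nat.findGreatest_spec
        (P := fun u => gm p q u * rr p q ^ (k+1) ≤ x) hcf hPc
    · by_cases hfg : greedy p q x (k+1) = fmax p q m
      · have : gm p q (greedy p q x (k+1) + 1) * rr p q ^ (k+1) = gm p q (m+1) * rr p q ^ k := by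
          rw [hfg, gm_succ hq hpq m, pow_succ]
          ring
        rw [this]
        exact ih.2
      · have hle := Nat.findGreatest_le (P := fun u => gm p q u * rr p q ^ (k+1) ≤ x)
          (fmax p q m)
        rw [← hgd] at hle
        have hlt : greedy p q x (k+1) < fmax p q m := lt_of_le_of_ne hle hfg
        have hng := Nat.findGreatest_is_greatest
          (P := fun u => gm p q u * rr p q ^ (k+1) ≤ x) (n := fmax p q m)
          (k := greedy p q x (k+1) + 1) (by rw [← hgd]; omega) (by omega)
        linarith [not_le.mp hng]

open scoped Classical in
lemma greedy_brackets {x : ℝ} (hx0 : 0 ≤ x) (hx1 : x ≤ gm p q 1) (k : ℕ) :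
    cmin p q (greedy p q x k) ≤ greedy p q x (k+1) ∧
      greedy p q x (k+1) ≤ fmax p q (greedy p q x k) := by
  have ih := greedy_inv hq hpq hx0 hx1 k
  set m := greedy p q x k with hm
  have hgd : greedy p q x (k+1)
      = Nat.findGreatest (fun u => gm p q u * rr p q ^ (k+1) ≤ x) (fmax p q m) := by
    rw [greedy]
  have hPc : gm p q (cmin p q m) * rr p q ^ (k+1) ≤ x := by
    have : gm p q (cmin p q m) * rr p q ^ (k+1) = gm p q m * rr p q ^ k := by
      rw [gm_rec hq hpq m, pow_succ]; ring
    rw [this]; exact ih.1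
  have hcf := cmin_le_fmax p q hpq.le m
  constructor
  · rw [hgd]; exact Nat.le_findGreatest hcf hPc
  · rw [hgd]; exact Nat.findGreatest_le _

lemma greedy_tendsto {x : ℝ} (hx0 : 0 ≤ x) (hx1 : x ≤ gm p q 1) :
    Tendsto (fun k => ((greedy p q x k : ℕ) : ℝ) * rr p q ^ k) atTop (𝓝 x) := by
  have hb : ∀ k, |((greedy p q x k : ℕ) : ℝ) * rr p q ^ k - x| ≤ ((q:ℝ)+1) * rr p q ^ k := by
    intro k
    have inv := greedy_inv hq hpq hx0 hx1 k
    have hrn : (0:ℝ) ≤ rr p q ^ k := pow_nonneg (rr_pos hq hpq).le k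
    have h1 : ((greedy p q x k : ℕ) : ℝ) * rr p q ^ k ≤ x := by
      calc ((greedy p q x k : ℕ) : ℝ) * rr p q ^ k
          ≤ gm p q (greedy p q x k) * rr p q ^ k :=
            mul_le_mul_of_nonneg_right (gm_ge hq hpq _) hrn
        _ ≤ x := inv.1
    have h2 : x ≤ (((greedy p q x k : ℕ) : ℝ) + 1 + q) * rr p q ^ k := by
      calc x ≤ gm p q (greedy p q x k + 1) * rr p q ^ k := inv.2
        _ ≤ (((greedy p q x k : ℕ) : ℝ) + 1 + q) * rr p q ^ k := by
            apply mul_le_mul_of_nonneg_right _ hrn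
            have := gm_le hq hpq (greedy p q x k + 1)
            push_cast at this ⊢
            linarith
    rw [abs_le]
    constructor <;> nlinarith
  have h0 : Tendsto (fun k => ((greedy p q x k : ℕ) : ℝ) * rr p q ^ k - x) atTop (𝓝 0) := by
    apply squeeze_zero_norm hb
    have := (tendsto_pow_atTop_nhds_zero_of_lt_one (rr_pos hq hpq).le
      (rr_lt_one hq hpq)).const_mul ((q:ℝ)+1)
    simpa using this
  have := h0.add_const x
  simpa using this

/-- span bounds -/
lemma span_nonneg {n : ℕ} {wl wu : ℕ → ℤ}
    (hwl : IsBranch p q (LowAlph q) n wl) (hwu : IsBranch p q (UpAlph p q) n wu) :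
    0 ≤ rho p q wu - rho p q wl := by
  apply ge_of_tendsto (span_tendsto hq hpq hwl hwu)
  apply Filter.Eventually.of_forall
  intro N
  have h := cmin_iter_le_fmax_iter p q hpq.le n N
  have h' : (((cmin p q)^[N] n : ℕ) : ℝ) ≤ (((fmax p q)^[N] n : ℕ) : ℝ) := by exact_mod_cast h
  have hrn : (0:ℝ) ≤ rr p q ^ N := pow_nonneg (rr_pos hq hpq).le N
  nlinarith

lemma span_le_gm_one {n : ℕ} {wl wu : ℕ → ℤ}
    (hwl : IsBranch p q (LowAlph q) n wl) (hwu : IsBranch p q (UpAlph p q) n wu) :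
    rho p q wu - rho p q wl ≤ gm p q 1 := by
  apply le_of_tendsto_of_tendsto' (span_tendsto hq hpq hwl hwu) (gm_tendsto hq hpq 1)
  intro N
  have h1 := diff_le_fmax_iter p q hq hpq.le n N
  have h2 := cmin_iter_one p q hq (by omega) N
  have hrn : (0:ℝ) ≤ rr p q ^ N := pow_nonneg (rr_pos hq hpq).le N
  have hch : (((fmax p q)^[N] n : ℕ) : ℝ) - (((cmin p q)^[N] n : ℕ) : ℝ)
      ≤ (((cmin p q)^[N] 1 : ℕ) : ℝ) := by
    have : ((fmax p q)^[N] n : ℤ) - ((cmin p q)^[N] n : ℤ) ≤ ((cmin p q)^[N] 1 : ℤ) := by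
      have e1 : ((fmax p q)^[N] n : ℤ) ≤ ((cmin p q)^[N] n : ℤ) + ((fmax p q)^[N] 0 : ℤ) := by
        exact_mod_cast h1
      have e2 : ((cmin p q)^[N] 1 : ℤ) = ((fmax p q)^[N] 0 : ℤ) + 1 := by exact_mod_cast h2
      omega
    exact_mod_cast this
  exact mul_le_mul_of_nonneg_right hch hrn

/-- Span ⊆ Sset in the narrow case p ≤ 2q-1 -/
lemma span_mem_narrow (hnarrow : (p:ℤ) - 2*q + 1 ≤ 0) {n : ℕ} {wl wu : ℕ → ℤ}
    (hwl : IsBranch p q (LowAlph q) n wl) (hwu : IsBranch p q (UpAlph p q) n wu) :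
    rho p q wu - rho p q wl ∈ Sset p q := by
  set x := rho p q wu - rho p q wl with hx
  have hx0 : 0 ≤ x := span_nonneg hq hpq hwl hwu
  have hx1 : x ≤ gm p q 1 := span_le_gm_one hq hpq hwl hwu
  have hzc : ∀ m : ℕ, (p:ℤ) * m ≤ q * cmin p q m ∧ (q:ℤ) * cmin p q m ≤ p * m + q - 1 :=
    fun m => cmin_zspec p q hq m
  have hzf : ∀ m : ℕ, (p:ℤ) * m + p - q ≤ q * fmax p q m ∧ (q:ℤ) * fmax p q m ≤ p * m + p - 1 :=
    fun m => fmax_zspec p q hq hpq.le m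
  have hqz : (0:ℤ) < (q:ℤ) := by exact_mod_cast hq
  have hbr := fun k => greedy_brackets hq hpq hx0 hx1 k
  have key1 : ∀ k, (p:ℤ) * greedy p q x k ≤ q * greedy p q x (k+1) := by
    intro k
    have h1 : (q:ℤ) * cmin p q (greedy p q x k) ≤ q * greedy p q x (k+1) := by
      apply mul_le_mul_of_nonneg_left _ hqz.le
      exact_mod_cast (hbr k).1
    have := (hzc (greedy p q x k)).1
    omega
  have key2 : ∀ k, (q:ℤ) * greedy p q x (k+1) ≤ p * greedy p q x k + p - 1 := by
    intro k
    have h1 : (q:ℤ) * greedy p q x (k+1) ≤ q * fmax p q (greedy p q x k) := by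
      apply mul_le_mul_of_nonneg_left _ hqz.le
      exact_mod_cast (hbr k).2
    have := (hzf (greedy p q x k)).2
    omega
  apply mem_Sset hq hpq (v := greedy p q x)
  · rfl
  · exact key1
  · exact key2
  · intro k
    have := key1 k
    have hv0 : (0:ℤ) ≤ (p:ℤ) * greedy p q x k := by positivity
    omega
  · exact greedy_tendsto hq hpq hx0 hx1

end
end S12

theorem stmt12 (p q : ℕ) (hco : Nat.Coprime p q) (hq : 1 < q) (hpq : q < p)
    (mw mx : ℕ → ℕ → ℤ)
    (hmw : ∀ n, IsBranch p q (LowAlph q) n (mw n))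
    (hmx : ∀ n, IsBranch p q (UpAlph p q) n (mx n)) :
    closure {x : ℝ | ∃ n : ℕ, x = rho p q (mx n) - rho p q (mw n)}
      = {x : ℝ | ∃ w : ℕ → ℤ, IsBranch p q (Ap p) 0 w ∧
          (∀ k, w k ∈ Dalph p q) ∧ x = rho p q w} := by
  have hq' : 0 < q := by omega
  apply Set.Subset.antisymm
  · apply closure_minimal _ (S12.Sset_isClosed hq' hpq)
    rintro x ⟨n, rfl⟩
    rcases le_or_gt (2*q) (p+1) with hc | hc
    · exact S12.span_mem_wide hq' hpq hc (hmw n) (hmx n)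
    · refine S12.span_mem_narrow hq' hpq ?_ (hmw n) (hmx n)
      have h2 : ((2*q : ℕ) : ℤ) > ((p + 1 : ℕ) : ℤ) := by exact_mod_cast hc
      push_cast at h2
      omega
  · exact S12.Sset_subset_closure hq' hpq hco hmw hmx
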